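/- Consider the coupled SIS epidemic–replicator dynamics. If the differentiable functions y, z_S, z_I : [0,∞) → ℝ satisfy the dynamics for all t ≥ 0 and y(0), z_S(0), z_I(0) ∈ [0,1], then y(t) ∈ [0,1], z_S(t) ∈ [0,1] and z_I(t) ∈ [0,1] for all t ≥ 0 (the cube [0,1]^3 is forward invariant). -/

import Mathlib

open intervalIntegral MeasureTheory

/-- If `u' = g·u + r` on `[0,∞)` with `g` continuous there, `r ≥ 0` there, and
`u 0 ≥ 0`, then `u ≥ 0` on `[0,∞)`. -/
lemma nonneg_of_linear_ode (u g r : ℝ → ℝ)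
    (hu : ∀ t ≥ (0:ℝ), HasDerivAt u (g t * u t + r t) t)
    (hg : ∀ t ≥ (0:ℝ), ContinuousAt g t)
    (hr : ∀ t ≥ (0:ℝ), 0 ≤ r t)
    (hu0 : 0 ≤ u 0) : ∀ t ≥ (0:ℝ), 0 ≤ u t := by
  set g' : ℝ → ℝ := fun t => g (max t 0) with hg'
  have hg'c : Continuous g' := by
    rw [continuous_iff_continuousAt]
    intro t
    have hm : ContinuousAt (fun s : ℝ => max s 0) t :=
      (continuous_id.max continuous_const).continuousAt
    exact ContinuousAt.comp (hg _ (le_max_right t 0)) hm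
  set G : ℝ → ℝ := fun t => ∫ s in (0:ℝ)..t, g' s with hG
  have hGd : ∀ t : ℝ, HasDerivAt G (g' t) t := fun t =>
    integral_hasDerivAt_right (hg'c.intervalIntegrable 0 t)
      hg'c.aestronglyMeasurable.stronglyMeasurableAtFilter hg'c.continuousAt
  set v : ℝ → ℝ := fun t => u t * Real.exp (-G t) with hv
  have hvd : ∀ t ≥ (0:ℝ), HasDerivAt v (r t * Real.exp (-G t)) t := by
    intro t ht
    have h1 : HasDerivAt (fun s => Real.exp (-G s)) (Real.exp (-G t) * (-g' t)) t :=
      (Real.hasDerivAt_exp _).comp t (hGd t).neg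
    have h2 := (hu t ht).mul h1
    have hgt : g' t = g t := by simp [hg', max_eq_left ht]
    exact h2.congr_deriv (by rw [hgt]; ring)
  intro T hT
  have hmono : MonotoneOn v (Set.Icc 0 T) := by
    apply monotoneOn_of_hasDerivWithinAt_nonneg (convex_Icc 0 T)
      (f' := fun t => r t * Real.exp (-G t))
    · intro t ht
      exact ((hvd t ht.1).continuousAt).continuousWithinAt
    · intro t ht
      rw [interior_Icc] at ht
      exact (hvd t ht.1.le).hasDerivWithinAt
    · intro t ht
      rw [interior_Icc] at ht
      exact mul_nonneg (hr t ht.1.le) (Real.exp_pos _).le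
  have h0 : v 0 ≤ v T := hmono (Set.left_mem_Icc.2 hT) (Set.right_mem_Icc.2 hT) hT
  have hv0 : v 0 = u 0 := by simp [hv, hG]
  have hvT : 0 ≤ v T := le_trans (hv0 ▸ hu0) h0
  have : v T * Real.exp (G T) = u T := by
    simp only [hv, Real.exp_neg]
    field_simp
  rw [← this]
  exact mul_nonneg hvT (Real.exp_pos _).le

/-- Forward invariance of the cube [0,1]³ for the coupled SIS
epidemic–replicator dynamics. -/
theorem sis_cube_forward_invariant
    (βu βp α γ cP L cIU cIP : ℝ)
    (hβ : βu > βp) (hβp : βp > 0) (hα : α ∈ Set.Ioo (0:ℝ) 1) (hγ : γ > 0)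
    (hcP : cP > 0) (hL : L > 0) (hc : cIU > cIP) (hcIP : cIP ≥ 0)
    (y zS zI : ℝ → ℝ)
    (hy : ∀ t ≥ (0:ℝ), HasDerivAt y
      (((1 - y t) * (zS t + α * (1 - zS t)) * (βu * zI t + βp * (1 - zI t)) - γ) * y t) t)
    (hzS : ∀ t ≥ (0:ℝ), HasDerivAt zS
      (zS t * (1 - zS t) * (cP - L * (1 - α) * (βu * zI t + βp * (1 - zI t)) * y t)) t)
    (hzI : ∀ t ≥ (0:ℝ), HasDerivAt zI (zI t * (1 - zI t) * (cIP - cIU)) t)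
    (hy0 : y 0 ∈ Set.Icc (0:ℝ) 1) (hzS0 : zS 0 ∈ Set.Icc (0:ℝ) 1)
    (hzI0 : zI 0 ∈ Set.Icc (0:ℝ) 1) :
    ∀ t ≥ (0:ℝ), y t ∈ Set.Icc (0:ℝ) 1 ∧ zS t ∈ Set.Icc (0:ℝ) 1 ∧
      zI t ∈ Set.Icc (0:ℝ) 1 := by
  have hyc : ∀ t ≥ (0:ℝ), ContinuousAt y t := fun t ht => (hy t ht).continuousAt
  have hzSc : ∀ t ≥ (0:ℝ), ContinuousAt zS t := fun t ht => (hzS t ht).continuousAt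
  have hzIc : ∀ t ≥ (0:ℝ), ContinuousAt zI t := fun t ht => (hzI t ht).continuousAt
  -- y ≥ 0
  have hy_nonneg : ∀ t ≥ (0:ℝ), 0 ≤ y t := by
    apply nonneg_of_linear_ode y
      (fun t => (1 - y t) * (zS t + α * (1 - zS t)) * (βu * zI t + βp * (1 - zI t)) - γ)
      (fun _ => 0)
    · intro t ht
      have := hy t ht
      convert this using 1; ring
    · intro t ht
      exact ((((continuousAt_const.sub (hyc t ht)).mul
        ((hzSc t ht).add (continuousAt_const.mul (continuousAt_const.sub (hzSc t ht))))).mul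
        ((continuousAt_const.mul (hzIc t ht)).add
          (continuousAt_const.mul (continuousAt_const.sub (hzIc t ht))))).sub continuousAt_const)
    · intro t _; exact le_refl 0
    · exact hy0.1
  -- y ≤ 1
  have hy_le : ∀ t ≥ (0:ℝ), 0 ≤ 1 - y t := by
    apply nonneg_of_linear_ode (fun t => 1 - y t)
      (fun t => -((zS t + α * (1 - zS t)) * (βu * zI t + βp * (1 - zI t)) * y t))
      (fun t => γ * y t)
    · intro t ht
      have := (hy t ht).const_sub 1
      exact this.congr_deriv (by ring)
    · intro t ht
      exact (((hzSc t ht).add (continuousAt_const.mul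
        (continuousAt_const.sub (hzSc t ht)))).mul
        ((continuousAt_const.mul (hzIc t ht)).add
          (continuousAt_const.mul (continuousAt_const.sub (hzIc t ht))))).mul (hyc t ht) |>.neg
    · intro t ht; exact mul_nonneg hγ.le (hy_nonneg t ht)
    · linarith [hy0.2]
  -- zS ≥ 0
  have hzS_nonneg : ∀ t ≥ (0:ℝ), 0 ≤ zS t := by
    apply nonneg_of_linear_ode zS
      (fun t => (1 - zS t) * (cP - L * (1 - α) * (βu * zI t + βp * (1 - zI t)) * y t))
      (fun _ => 0)
    · intro t ht
      have := hzS t ht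
      convert this using 1; ring
    · intro t ht
      exact (continuousAt_const.sub (hzSc t ht)).mul (continuousAt_const.sub
        ((continuousAt_const.mul ((continuousAt_const.mul (hzIc t ht)).add
          (continuousAt_const.mul (continuousAt_const.sub (hzIc t ht))))).mul (hyc t ht)))
    · intro t _; exact le_refl 0
    · exact hzS0.1
  -- zS ≤ 1
  have hzS_le : ∀ t ≥ (0:ℝ), 0 ≤ 1 - zS t := by
    apply nonneg_of_linear_ode (fun t => 1 - zS t)
      (fun t => -(zS t * (cP - L * (1 - α) * (βu * zI t + βp * (1 - zI t)) * y t)))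
      (fun _ => 0)
    · intro t ht
      have := (hzS t ht).const_sub 1
      exact this.congr_deriv (by ring)
    · intro t ht
      exact ((hzSc t ht).mul (continuousAt_const.sub
        ((continuousAt_const.mul ((continuousAt_const.mul (hzIc t ht)).add
          (continuousAt_const.mul (continuousAt_const.sub (hzIc t ht))))).mul (hyc t ht)))).neg
    · intro t _; exact le_refl 0
    · linarith [hzS0.2]
  -- zI ≥ 0
  have hzI_nonneg : ∀ t ≥ (0:ℝ), 0 ≤ zI t := by
    apply nonneg_of_linear_ode zI (fun t => (1 - zI t) * (cIP - cIU)) (fun _ => 0)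
    · intro t ht
      have := hzI t ht
      convert this using 1; ring
    · intro t ht
      exact (continuousAt_const.sub (hzIc t ht)).mul continuousAt_const
    · intro t _; exact le_refl 0
    · exact hzI0.1
  -- zI ≤ 1
  have hzI_le : ∀ t ≥ (0:ℝ), 0 ≤ 1 - zI t := by
    apply nonneg_of_linear_ode (fun t => 1 - zI t)
      (fun t => -(zI t * (cIP - cIU))) (fun _ => 0)
    · intro t ht
      have := (hzI t ht).const_sub 1
      exact this.congr_deriv (by ring)
    · intro t ht
      exact ((hzIc t ht).mul continuousAt_const).neg
    · intro t _; exact le_refl 0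
    · linarith [hzI0.2]
  intro t ht
  exact ⟨⟨hy_nonneg t ht, by linarith [hy_le t ht]⟩,
    ⟨hzS_nonneg t ht, by linarith [hzS_le t ht]⟩,
    ⟨hzI_nonneg t ht, by linarith [hzI_le t ht]⟩⟩
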